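/- arXiv:2104.05184 — 6 statements merged into one kernel-verified Lean document; each statement's English description precedes it below -/
import Mathlib

section
/- Let Φ ∈ ℝ^{T×K}, V ∈ ℝ^{J×K}, β ∈ ℝ^{q×K}, z ∈ ℝ^q, and s_1,…,s_K > 0. Let W = V⊙Φ be the column-wise Khatri-Rao product, and define the mean vector m = W βᵀ z ∈ ℝ^{J·T} and the matrix C = W · diag(s_1²,…,s_K²) · Wᵀ ∈ ℝ^{(J·T)×(J·T)}. Fix k ∈ {1,…,K} and real numbers c₁, c₂, c₃ with c₁c₂c₃ = 1. Let Φ′, V′, β′ be obtained from Φ, V, β by replacing the k-th columns with c₁Φ_k, c₂V_k, c₃β_k respectively (other columns unchanged), and let s′ be obtained from s by replacing s_k² with c₃²s_k². Then the rescaled mean m′ = (V′⊙Φ′)(β′)ᵀz equals m and the rescaled matrix C′ = (V′⊙Φ′)·diag((s′_1)²,…,(s′_K)²)·(V′⊙Φ′)ᵀ equals C. -/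
open Matrix

/-- Non-identifiability of SPACO parameters: rescaling the k-th columns of Φ, V, β by
c₁, c₂, c₃ with c₁c₂c₃ = 1 and replacing s_k² by c₃²s_k² leaves the marginal mean
m = (V⊙Φ)βᵀz and the signal covariance C = (V⊙Φ)diag(s²)(V⊙Φ)ᵀ unchanged. -/
theorem spaco_rescaling_invariance
    {T J q K : ℕ}
    (Φ : Matrix (Fin T) (Fin K) ℝ) (V : Matrix (Fin J) (Fin K) ℝ)
    (β : Matrix (Fin q) (Fin K) ℝ) (z : Fin q → ℝ)
    (s : Fin K → ℝ) (hs : ∀ l, 0 < s l)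
    (k : Fin K) (c₁ c₂ c₃ : ℝ) (hc : c₁ * c₂ * c₃ = 1) :
    let W : Matrix (Fin J × Fin T) (Fin K) ℝ := fun p l => V p.1 l * Φ p.2 l
    let Φ' : Matrix (Fin T) (Fin K) ℝ := fun t l => if l = k then c₁ * Φ t l else Φ t l
    let V' : Matrix (Fin J) (Fin K) ℝ := fun j l => if l = k then c₂ * V j l else V j l
    let β' : Matrix (Fin q) (Fin K) ℝ := fun i l => if l = k then c₃ * β i l else β i l
    let s2' : Fin K → ℝ := fun l => if l = k then c₃ ^ 2 * s l ^ 2 else s l ^ 2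
    let W' : Matrix (Fin J × Fin T) (Fin K) ℝ := fun p l => V' p.1 l * Φ' p.2 l
    W'.mulVec ((β')ᵀ.mulVec z) = W.mulVec (βᵀ.mulVec z) ∧
      W' * Matrix.diagonal s2' * W'ᵀ = W * Matrix.diagonal (fun l => s l ^ 2) * Wᵀ := by
  intro W Φ' V' β' s2' W'
  constructor
  · funext p
    simp only [mulVec, dotProduct, transpose_apply, W, W', V', Φ', β', Matrix.transpose, of_apply]
    refine Finset.sum_congr rfl fun l _ => ?_
    by_cases h : l = k
    · simp only [if_pos h]
      have hsum : (∑ i, (c₃ * β i l) * z i) = c₃ * ∑ i, β i l * z i := by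
        rw [Finset.mul_sum]; exact Finset.sum_congr rfl fun i _ => by ring
      rw [hsum]
      linear_combination V p.1 l * Φ p.2 l * (∑ i, β i l * z i) * hc
    · simp [h]
  · have expand : ∀ (A : Matrix (Fin J × Fin T) (Fin K) ℝ) (d : Fin K → ℝ)
        (p p' : Fin J × Fin T),
        (A * Matrix.diagonal d * Aᵀ) p p' = ∑ l, A p l * d l * A p' l := by
      intro A d p p'
      rw [Matrix.mul_apply]
      exact Finset.sum_congr rfl fun l _ => by
        rw [Matrix.mul_diagonal, transpose_apply]
    funext p p'
    rw [expand, expand]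
    refine Finset.sum_congr rfl fun l _ => ?_
    simp only [W, W', V', Φ', β', s2']
    by_cases h : l = k
    · simp only [if_pos h]
      linear_combination (V p.1 l * Φ p.2 l * V p'.1 l * Φ p'.2 l * s l ^ 2 *
        (c₁ * c₂ * c₃ + 1)) * hc
    · simp [h]
end

section
/- Fix positive integers I, T, J, K, q. Let Φ ∈ ℝ^{T×K}, V ∈ ℝ^{J×K}, β ∈ ℝ^{q×K}, s_1,…,s_K > 0, and set Λ_f = diag(1/s_1²,…,1/s_K²). Let W = V⊙Φ be the column-wise Khatri-Rao product. For each i = 1,…,I, let S_i be a subset of the row indices of W, let M_i be the submatrix of W formed by the rows in S_i, let x_i ∈ ℝ^{S_i}, z_i ∈ ℝ^q, and let Λ_i be a symmetric positive definite matrix indexed by S_i × S_i. Assume each Λ_f + M_iᵀΛ_iM_i is invertible, set Σ_i = (Λ_f + M_iᵀΛ_iM_i)⁻¹ and μ_i = Σ_i(Λ_fβᵀz_i + M_iᵀΛ_ix_i), and define L(Φ,V,β,s) = −(1/2)Σ_{i=1}^I (x_iᵀΛ_ix_i + z_iᵀβΛ_fβᵀz_i − μ_iᵀΣ_i⁻¹μ_i)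 + (1/2)(Σ_{i=1}^I (log det Λ_i + log det Σ_i) + I·log det Λ_f). Fix k ∈ {1,…,K} and nonzero reals c₁, c₂, c₃ with c₁c₂c₃ = 1, and let Φ′, V′, β′, s′ be obtained by replacing the k-th columns of Φ, V, β by c₁Φ_k, c₂V_k, c₃β_k and s_k² by c₃²s_k² (other entries unchanged). Then L(Φ′,V′,β′,s′) = L(Φ,V,β,s). -/
open Matrix

private lemma spaco_diag_dot {K : ℕ} (g a b : Fin K → ℝ) :
    (Matrix.diagonal g *ᵥ a) ⬝ᵥ b = a ⬝ᵥ (Matrix.diagonal g *ᵥ b) := by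
  simp only [dotProduct, Matrix.mulVec_diagonal]
  exact Finset.sum_congr rfl fun i _ => by ring

private lemma spaco_quad_inv {K : ℕ} (B : Matrix (Fin K) (Fin K) ℝ) (hB : IsUnit B.det)
    (w : Fin K → ℝ) :
    (B⁻¹ *ᵥ w) ⬝ᵥ (B⁻¹⁻¹ *ᵥ (B⁻¹ *ᵥ w)) = (B⁻¹ *ᵥ w) ⬝ᵥ w := by
  rw [Matrix.mulVec_mulVec, Matrix.nonsing_inv_nonsing_inv _ hB, Matrix.mul_nonsing_inv _ hB,
    Matrix.one_mulVec]

private lemma spaco_quad_scaled {K : ℕ} (D E : Matrix (Fin K) (Fin K) ℝ)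
    (hDE : D * E = 1) (hED : E * D = 1)
    (hdot : ∀ a b : Fin K → ℝ, (E *ᵥ a) ⬝ᵥ b = a ⬝ᵥ (E *ᵥ b))
    (B : Matrix (Fin K) (Fin K) ℝ) (hB : IsUnit B.det) (w : Fin K → ℝ) :
    ((E * B⁻¹ * E) *ᵥ (D *ᵥ w)) ⬝ᵥ
      ((E * B⁻¹ * E)⁻¹ *ᵥ ((E * B⁻¹ * E) *ᵥ (D *ᵥ w))) = (B⁻¹ *ᵥ w) ⬝ᵥ w := by
  have hEinv : E⁻¹ = D := Matrix.inv_eq_right_inv hED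
  have h1 : (E * B⁻¹ * E) *ᵥ (D *ᵥ w) = E *ᵥ (B⁻¹ *ᵥ w) := by
    simp only [Matrix.mulVec_mulVec]
    rw [Matrix.mul_assoc, hED, Matrix.mul_one]
  have h2 : (E * B⁻¹ * E)⁻¹ = D * B * D := by
    rw [Matrix.mul_inv_rev, Matrix.mul_inv_rev, hEinv,
      Matrix.nonsing_inv_nonsing_inv _ hB, ← Matrix.mul_assoc]
  rw [h1, h2]
  have h3 : (D * B * D) *ᵥ (E *ᵥ (B⁻¹ *ᵥ w)) = D *ᵥ w := by
    simp only [Matrix.mulVec_mulVec]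
    have : D * B * D * (E * B⁻¹) = D * B * (D * E) * B⁻¹ := by noncomm_ring
    rw [this, hDE, Matrix.mul_one, Matrix.mul_assoc, Matrix.mul_nonsing_inv _ hB,
      Matrix.mul_one]
  rw [h3, hdot, Matrix.mulVec_mulVec, hED, Matrix.one_mulVec]

/-- Proposition 1 of the paper: the marginal log-likelihood of the SPACO model is
invariant under the rescaling (Φ_k, V_k, β_k, s_k²) ↦ (c₁Φ_k, c₂V_k, c₃β_k, c₃²s_k²)
with c₁c₂c₃ = 1. The subsets S_i of row indices of W = V⊙Φ are modeled by injections
e i : Fin (n i) → Fin J × Fin T, and M_i is the corresponding submatrix of W. -/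
theorem spaco_marginal_loglik_invariance
    {I T J K q : ℕ} (hI : 0 < I) (hT : 0 < T) (hJ : 0 < J) (hK : 0 < K) (hq : 0 < q)
    (Φ : Matrix (Fin T) (Fin K) ℝ) (V : Matrix (Fin J) (Fin K) ℝ)
    (β : Matrix (Fin q) (Fin K) ℝ) (s : Fin K → ℝ) (hs : ∀ l, 0 < s l)
    (n : Fin I → ℕ) (e : ∀ i, Fin (n i) → Fin J × Fin T)
    (he : ∀ i, Function.Injective (e i))
    (x : ∀ i, Fin (n i) → ℝ) (z : Fin I → Fin q → ℝ)
    (Λ : ∀ i, Matrix (Fin (n i)) (Fin (n i)) ℝ)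
    (hΛ : ∀ i, (Λ i).PosDef)
    (k : Fin K) (c₁ c₂ c₃ : ℝ) (hc₁ : c₁ ≠ 0) (hc₂ : c₂ ≠ 0) (hc₃ : c₃ ≠ 0)
    (hc : c₁ * c₂ * c₃ = 1) :
    -- the submatrix of the Khatri-Rao product V⊙Φ picked out by the rows in S_i
    let M : Matrix (Fin T) (Fin K) ℝ → Matrix (Fin J) (Fin K) ℝ →
        ∀ i : Fin I, Matrix (Fin (n i)) (Fin K) ℝ :=
      fun Φv Vv i => fun r l => Vv (e i r).1 l * Φv (e i r).2 l
    -- the marginal log-likelihood as a function of (Φ, V, β, s²)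
    let L : Matrix (Fin T) (Fin K) ℝ → Matrix (Fin J) (Fin K) ℝ →
        Matrix (Fin q) (Fin K) ℝ → (Fin K → ℝ) → ℝ :=
      fun Φv Vv βv s2 =>
        let Λf : Matrix (Fin K) (Fin K) ℝ := Matrix.diagonal fun l => (s2 l)⁻¹
        let Sg : ∀ i : Fin I, Matrix (Fin K) (Fin K) ℝ :=
          fun i => (Λf + (M Φv Vv i)ᵀ * Λ i * M Φv Vv i)⁻¹
        let μ : ∀ i : Fin I, Fin K → ℝ :=
          fun i => (Sg i).mulVec (Λf.mulVec (βvᵀ.mulVec (z i))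
            + (M Φv Vv i)ᵀ.mulVec ((Λ i).mulVec (x i)))
        (-(1/2) * (∑ i, (x i ⬝ᵥ (Λ i).mulVec (x i)
              + z i ⬝ᵥ (βv * Λf * βvᵀ).mulVec (z i)
              - μ i ⬝ᵥ ((Sg i)⁻¹).mulVec (μ i)))
          + (1/2) * ((∑ i, (Real.log (Λ i).det + Real.log (Sg i).det))
              + (I : ℝ) * Real.log Λf.det))
    -- rescaled parameters
    let Φ' : Matrix (Fin T) (Fin K) ℝ := fun t l => if l = k then c₁ * Φ t l else Φ t l
    let V' : Matrix (Fin J) (Fin K) ℝ := fun j l => if l = k then c₂ * V j l else V j l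
    let β' : Matrix (Fin q) (Fin K) ℝ := fun i l => if l = k then c₃ * β i l else β i l
    let s2' : Fin K → ℝ := fun l => if l = k then c₃ ^ 2 * s l ^ 2 else s l ^ 2
    -- each Λ_f + M_iᵀΛ_iM_i is invertible (at the original parameters)
    ∀ _hinv : (∀ i, IsUnit ((Matrix.diagonal fun l => (s l ^ 2)⁻¹)
        + (M Φ V i)ᵀ * Λ i * M Φ V i)),
      L Φ' V' β' s2' = L Φ V β (fun l => s l ^ 2) := by
  intro M L Φ' V' β' s2' hinv
  have hc12 : c₁ * c₂ = c₃⁻¹ := by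
    field_simp
    linear_combination hc
  simp only [L]
  set d : Fin K → ℝ := fun l => if l = k then c₃⁻¹ else 1 with hddef
  set g : Fin K → ℝ := fun l => if l = k then c₃ else 1 with hgdef
  set Λf : Matrix (Fin K) (Fin K) ℝ := Matrix.diagonal fun l => (s l ^ 2)⁻¹ with hΛfdef
  set D : Matrix (Fin K) (Fin K) ℝ := Matrix.diagonal d with hDdef
  set E : Matrix (Fin K) (Fin K) ℝ := Matrix.diagonal g with hEdef
  have hdg : ∀ l, d l * g l = 1 := by
    intro l; rw [hddef, hgdef]
    by_cases hl : l = k <;> simp [hl, inv_mul_cancel₀ hc₃]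
  have hgd : ∀ l, g l * d l = 1 := fun l => by rw [mul_comm]; exact hdg l
  have hDE : D * E = 1 := by
    rw [hDdef, hEdef, Matrix.diagonal_mul_diagonal]
    simp only [hdg]
    exact Matrix.diagonal_one
  have hED : E * D = 1 := by
    rw [hDdef, hEdef, Matrix.diagonal_mul_diagonal]
    simp only [hgd]
    exact Matrix.diagonal_one
  have hDinv : D⁻¹ = E := Matrix.inv_eq_right_inv hDE
  have hdot : ∀ a b : Fin K → ℝ, (E *ᵥ a) ⬝ᵥ b = a ⬝ᵥ (E *ᵥ b) := by
    intro a b; rw [hEdef]; exact spaco_diag_dot g a b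
  have hdetD : D.det = c₃⁻¹ := by
    rw [hDdef, Matrix.det_diagonal, hddef]
    simp
  have hdetE : E.det = c₃ := by
    rw [hEdef, Matrix.det_diagonal, hgdef]
    simp
  have hΛfdet : Λf.det ≠ 0 := by
    rw [hΛfdef, Matrix.det_diagonal]
    exact Finset.prod_ne_zero_iff.mpr fun l _ => inv_ne_zero (pow_ne_zero 2 (hs l).ne')
  have hAu : ∀ i, IsUnit (Λf + (M Φ V i)ᵀ * Λ i * M Φ V i).det :=
    fun i => (Matrix.isUnit_iff_isUnit_det _).mp (hinv i)
  -- key structural rewrites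
  have hΛfp : (Matrix.diagonal fun l => (s2' l)⁻¹) = D * Λf * D := by
    rw [hDdef, hΛfdef, Matrix.diagonal_mul_diagonal, Matrix.diagonal_mul_diagonal]
    refine congrArg Matrix.diagonal (funext fun l => ?_)
    simp only [s2', hddef]
    by_cases hl : l = k
    · subst hl
      simp only [eq_self_iff_true, if_true]
      rw [mul_inv, sq c₃, mul_inv]
      ring
    · simp [hl]
  have hM : ∀ i, M Φ' V' i = M Φ V i * D := by
    intro i; ext r l
    rw [hDdef, Matrix.mul_diagonal]
    simp only [M, Φ', V', hddef]
    by_cases hl : l = k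
    · subst hl
      simp only [eq_self_iff_true, if_true]
      rw [← hc12]
      ring
    · simp [hl]
  have hβE : β' = β * E := by
    ext a l
    rw [hEdef, Matrix.mul_diagonal]
    simp only [β', hgdef]
    by_cases hl : l = k
    · subst hl
      simp only [eq_self_iff_true, if_true]
      ring
    · simp [hl]
  have hA : ∀ i, D * Λf * D + (M Φ V i * D)ᵀ * Λ i * (M Φ V i * D)
      = D * (Λf + (M Φ V i)ᵀ * Λ i * M Φ V i) * D := by
    intro i
    rw [Matrix.transpose_mul, hDdef, Matrix.diagonal_transpose, ← hDdef]
    simp only [Matrix.mul_add, Matrix.add_mul, Matrix.mul_assoc]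
  have hβquad : β * E * (D * Λf * D) * (β * E)ᵀ = β * Λf * βᵀ := by
    have hEt : Eᵀ = E := by rw [hEdef]; exact Matrix.diagonal_transpose g
    rw [Matrix.transpose_mul, hEt]
    have h1 : β * E * (D * Λf * D) * (E * βᵀ) = β * ((E * D) * (Λf * ((D * E) * βᵀ))) := by
      simp only [Matrix.mul_assoc]
    rw [h1, hED, hDE, Matrix.one_mul, Matrix.one_mul, ← Matrix.mul_assoc]
  have hvec : ∀ i, (D * Λf * D) *ᵥ (β * E)ᵀ *ᵥ z i + (M Φ V i * D)ᵀ *ᵥ Λ i *ᵥ x i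
      = D *ᵥ (Λf *ᵥ βᵀ *ᵥ z i + (M Φ V i)ᵀ *ᵥ Λ i *ᵥ x i) := by
    intro i
    have hEt : Eᵀ = E := by rw [hEdef]; exact Matrix.diagonal_transpose g
    have hDt : Dᵀ = D := by rw [hDdef]; exact Matrix.diagonal_transpose d
    rw [Matrix.mulVec_add, Matrix.transpose_mul, Matrix.transpose_mul, hEt, hDt]
    congr 1
    · simp only [Matrix.mulVec_mulVec]
      congr 1
      simp only [Matrix.mul_assoc]
      rw [show D * (E * βᵀ) = (D * E) * βᵀ from (Matrix.mul_assoc D E βᵀ).symm, hDE,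
        Matrix.one_mul]
    · simp only [Matrix.mulVec_mulVec, Matrix.mul_assoc]
  have hSgD : ∀ i, (D * (Λf + (M Φ V i)ᵀ * Λ i * M Φ V i) * D)⁻¹
      = E * (Λf + (M Φ V i)ᵀ * Λ i * M Φ V i)⁻¹ * E := by
    intro i
    rw [Matrix.mul_inv_rev, Matrix.mul_inv_rev, hDinv, ← Matrix.mul_assoc]
  simp only [hΛfp, hM, hβE, hA, hβquad, hvec, hSgD]
  have hAinvdet : ∀ i, ((Λf + (M Φ V i)ᵀ * Λ i * M Φ V i)⁻¹).det ≠ 0 := by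
    intro i
    rw [Matrix.det_nonsing_inv, Ring.inverse_eq_inv']
    exact inv_ne_zero (hAu i).ne_zero
  have hdet1 : ∀ i, Real.log (E * (Λf + (M Φ V i)ᵀ * Λ i * M Φ V i)⁻¹ * E).det
      = Real.log (c₃ ^ 2) + Real.log ((Λf + (M Φ V i)ᵀ * Λ i * M Φ V i)⁻¹).det := by
    intro i
    rw [Matrix.det_mul, Matrix.det_mul, hdetE]
    rw [show c₃ * ((Λf + (M Φ V i)ᵀ * Λ i * M Φ V i)⁻¹).det * c₃
        = c₃ ^ 2 * ((Λf + (M Φ V i)ᵀ * Λ i * M Φ V i)⁻¹).det from by ring]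
    exact Real.log_mul (pow_ne_zero 2 hc₃) (hAinvdet i)
  have hdet2 : Real.log (D * Λf * D).det = Real.log Λf.det - Real.log (c₃ ^ 2) := by
    rw [Matrix.det_mul, Matrix.det_mul, hdetD]
    rw [show c₃⁻¹ * Λf.det * c₃⁻¹ = (c₃ ^ 2)⁻¹ * Λf.det from by ring]
    rw [Real.log_mul (inv_ne_zero (pow_ne_zero 2 hc₃)) hΛfdet, Real.log_inv]
    ring
  simp only [spaco_quad_scaled D E hDE hED hdot, spaco_quad_inv, hAu, hdet1, hdet2]
  simp only [Finset.sum_add_distrib, Finset.sum_sub_distrib, Finset.sum_const,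
    Finset.card_univ, Fintype.card_fin, nsmul_eq_mul]
  ring
end

section
/- Let s_1,…,s_K > 0 and Λ_f = diag(1/s_1²,…,1/s_K²) ∈ ℝ^{K×K}, let Λ ∈ ℝ^{n×n} be symmetric, M ∈ ℝ^{n×K}, and assume Λ_f + MᵀΛM is invertible with Σ = (Λ_f + MᵀΛM)⁻¹. Let x ∈ ℝⁿ and z ∈ ℝ^q. Fix k ∈ {1,…,K} and assume w := s_k² − Σ_{kk} > 0. For β ∈ ℝ^{q×K} with columns β_1,…,β_K, define μ(β) = Σ(Λ_f βᵀz + MᵀΛx), z̃ = (√w / s_k²)·z ∈ ℝ^q, and ỹ = (1/√w)·(e_kᵀΣMᵀΛx + Σ_{ℓ≠k} (Σ_{kℓ}/s_ℓ²)·zᵀβ_ℓ), where e_k is the k-th standard basis vector of ℝᴷ. Then, with the columns β_ℓ for ℓ ≠ k held fixed, the function β_k ↦ zᵀβΛ_fβᵀz − μ(β)ᵀΣ⁻¹μ(β) − (z̃ᵀβ_k − ỹ)² is constant in β_k ∈ ℝ^q. -/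
open Matrix

lemma spaco_core (sk2 Skk w r u u' ck b d : ℝ)
    (hsk2 : sk2 ≠ 0) (hw : w = sk2 - Skk) (hr : r ^ 2 = w) (hr0 : r ≠ 0)
    (hb : b = Skk * ck + d) :
    (sk2⁻¹*u^2 - ((sk2⁻¹*u+ck)*(Skk*(sk2⁻¹*u+ck)) + (sk2⁻¹*u+ck)*d + d*(sk2⁻¹*u+ck)) - (r*sk2⁻¹*u - b/r)^2)
    = (sk2⁻¹*u'^2 - ((sk2⁻¹*u'+ck)*(Skk*(sk2⁻¹*u'+ck)) + (sk2⁻¹*u'+ck)*d + d*(sk2⁻¹*u'+ck)) - (r*sk2⁻¹*u' - b/r)^2) := by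
  have hw0 : w ≠ 0 := by rw [← hr]; exact pow_ne_zero 2 hr0
  have hsq : ∀ v : ℝ, (r*sk2⁻¹*v - b/r)^2 = (w*sk2⁻¹*v - b)^2/w := by
    intro v
    rw [show r*sk2⁻¹*v - b/r = (r^2*sk2⁻¹*v - b)/r by field_simp, div_pow, hr]
  rw [hsq, hsq]
  subst hb hw
  field_simp
  ring

/-- The β_k-update of SPACO (Lemma 1 / Proposition 2): with the other columns of β fixed,
the β_k-dependent part of the negative marginal log-likelihood,
zᵀβΛ_fβᵀz − μ(β)ᵀΣ⁻¹μ(β), differs from (z̃ᵀβ_k − ỹ)² by a quantity constant in β_k. -/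
theorem spaco_beta_update_least_squares
    {n K q : ℕ} (s : Fin K → ℝ) (hs : ∀ l, 0 < s l)
    (Λ : Matrix (Fin n) (Fin n) ℝ) (hΛ : Λ.IsSymm)
    (M : Matrix (Fin n) (Fin K) ℝ)
    (hinv : IsUnit ((Matrix.diagonal fun l => (s l ^ 2)⁻¹) + Mᵀ * Λ * M))
    (x : Fin n → ℝ) (z : Fin q → ℝ) (k : Fin K)
    (hw : 0 < s k ^ 2 - ((Matrix.diagonal fun l => (s l ^ 2)⁻¹) + Mᵀ * Λ * M)⁻¹ k k) :
    let Λf : Matrix (Fin K) (Fin K) ℝ := Matrix.diagonal fun l => (s l ^ 2)⁻¹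
    let S := (Λf + Mᵀ * Λ * M)⁻¹
    let w := s k ^ 2 - S k k
    let zt : Fin q → ℝ := fun i => (Real.sqrt w / s k ^ 2) * z i
    let yt : Matrix (Fin q) (Fin K) ℝ → ℝ := fun β =>
      (1 / Real.sqrt w) * ((fun l => S k l) ⬝ᵥ Mᵀ.mulVec (Λ.mulVec x)
        + ∑ l ∈ Finset.univ.erase k, (S k l / s l ^ 2) * (z ⬝ᵥ fun i => β i l))
    let μ : Matrix (Fin q) (Fin K) ℝ → (Fin K → ℝ) := fun β =>
      S.mulVec (Λf.mulVec (βᵀ.mulVec z) + Mᵀ.mulVec (Λ.mulVec x))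
    let F : Matrix (Fin q) (Fin K) ℝ → ℝ := fun β =>
      (z ⬝ᵥ (β * Λf * βᵀ).mulVec z - μ β ⬝ᵥ (S⁻¹).mulVec (μ β)
        - (zt ⬝ᵥ (fun i => β i k) - yt β) ^ 2)
    ∀ β β' : Matrix (Fin q) (Fin K) ℝ,
      (∀ l, l ≠ k → ∀ i, β i l = β' i l) → F β = F β' := by
  intro Λf S w zt yt μ F β β' hcols
  -- abbreviations
  set A : Matrix (Fin K) (Fin K) ℝ := Λf + Mᵀ * Λ * M with hA
  have hS : S = A⁻¹ := rfl
  have hdet : IsUnit A.det := (Matrix.isUnit_iff_isUnit_det A).mp hinv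
  have hAS : A * S = 1 := Matrix.mul_nonsing_inv A hdet
  have hSinv : S⁻¹ = A := Matrix.nonsing_inv_nonsing_inv A hdet
  have hAsymm : Aᵀ = A := by
    rw [hA, Matrix.transpose_add, Matrix.transpose_mul, Matrix.transpose_mul,
      Matrix.transpose_transpose, Matrix.IsSymm.eq hΛ,
      show Λfᵀ = Λf from Matrix.diagonal_transpose _, ← Matrix.mul_assoc]
  have hSsymm : ∀ l m, S l m = S m l := by
    intro l m
    have : Sᵀ = S := by rw [hS, Matrix.transpose_nonsing_inv, hAsymm]
    calc S l m = Sᵀ m l := rfl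
    _ = S m l := by rw [this]
  -- scalars
  have hwpos : 0 < w := hw
  have hw0 : w ≠ 0 := ne_of_gt hwpos
  set r : ℝ := Real.sqrt w with hrdef
  have hr : r ^ 2 = w := Real.sq_sqrt hwpos.le
  have hr0 : r ≠ 0 := (Real.sqrt_pos.mpr hwpos).ne'
  have hsk2 : s k ^ 2 ≠ 0 := pow_ne_zero 2 (hs k).ne'
  set c : Fin K → ℝ := Mᵀ.mulVec (Λ.mulVec x) with hc
  -- Part A: F γ in scalar form
  have hF : ∀ γ : Matrix (Fin q) (Fin K) ℝ,
      F γ = (∑ l, (γᵀ.mulVec z) l * ((s l ^ 2)⁻¹ * (γᵀ.mulVec z) l))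
        - (∑ l, ((s l ^ 2)⁻¹ * (γᵀ.mulVec z) l + c l) * ∑ m, S l m * ((s m ^ 2)⁻¹ * (γᵀ.mulVec z) m + c m))
        - (r * (s k ^ 2)⁻¹ * (γᵀ.mulVec z) k
            - ((∑ l, S k l * c l) + ∑ l ∈ Finset.univ.erase k, (S k l / s l ^ 2) * (γᵀ.mulVec z) l) / r) ^ 2 := by
    intro γ
    set p : Fin K → ℝ := γᵀ.mulVec z with hp
    have hpl : ∀ l, p l = ∑ i, γ i l * z i := by
      intro l; rw [hp]; simp [Matrix.mulVec, dotProduct, Matrix.transpose_apply]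
    have hv : Λf.mulVec p + c = fun l => (s l ^ 2)⁻¹ * p l + c l := by
      funext l
      simp [Matrix.mulVec_diagonal, Λf]
    -- term 1
    have ht1 : z ⬝ᵥ (γ * Λf * γᵀ).mulVec z = ∑ l, p l * ((s l ^ 2)⁻¹ * p l) := by
      rw [← Matrix.mulVec_mulVec, ← Matrix.mulVec_mulVec, Matrix.dotProduct_mulVec,
        ← Matrix.mulVec_transpose]
      show p ⬝ᵥ Λf.mulVec p = _
      simp [dotProduct, Matrix.mulVec_diagonal, Λf]
    -- term 2
    have ht2 : μ γ ⬝ᵥ (S⁻¹).mulVec (μ γ)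
        = ∑ l, ((s l ^ 2)⁻¹ * p l + c l) * ∑ m, S l m * ((s m ^ 2)⁻¹ * p m + c m) := by
      have hμ : μ γ = S.mulVec (fun l => (s l ^ 2)⁻¹ * p l + c l) := by
        show S.mulVec (Λf.mulVec p + c) = _
        rw [hv]
      rw [hμ, hSinv, Matrix.mulVec_mulVec, hS, Matrix.mul_nonsing_inv A hdet, Matrix.one_mulVec,
        dotProduct_comm]
      simp [dotProduct, Matrix.mulVec]
    -- term 3
    have ht3a : zt ⬝ᵥ (fun i => γ i k) = r * (s k ^ 2)⁻¹ * p k := by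
      show (fun i => (r / s k ^ 2) * z i) ⬝ᵥ (fun i => γ i k) = _
      rw [hpl k]
      simp only [dotProduct, Finset.mul_sum]
      refine Finset.sum_congr rfl fun i _ => by field_simp
    have ht3b : yt γ = ((∑ l, S k l * c l) + ∑ l ∈ Finset.univ.erase k, (S k l / s l ^ 2) * p l) / r := by
      show (1 / r) * ((fun l => S k l) ⬝ᵥ c + ∑ l ∈ Finset.univ.erase k, (S k l / s l ^ 2) * (z ⬝ᵥ fun i => γ i l)) = _
      have h1 : ((fun l => S k l) ⬝ᵥ c) = ∑ l, S k l * c l := rfl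
      have h2 : (∑ l ∈ Finset.univ.erase k, (S k l / s l ^ 2) * (z ⬝ᵥ fun i => γ i l))
          = ∑ l ∈ Finset.univ.erase k, (S k l / s l ^ 2) * p l := by
        refine Finset.sum_congr rfl fun l _ => ?_
        rw [hpl l]
        congr 1
        simp [dotProduct, mul_comm]
      rw [one_div, inv_mul_eq_div, h1, h2]
    show z ⬝ᵥ (γ * Λf * γᵀ).mulVec z - μ γ ⬝ᵥ (S⁻¹).mulVec (μ γ) - (zt ⬝ᵥ (fun i => γ i k) - yt γ) ^ 2 = _
    rw [ht1, ht2, ht3a, ht3b]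
  rw [hF β, hF β']
  -- Part B: scalar identity
  set p : Fin K → ℝ := βᵀ.mulVec z with hp
  set p' : Fin K → ℝ := β'ᵀ.mulVec z with hp'
  have hagree : ∀ l ∈ Finset.univ.erase k, p l = p' l := by
    intro l hl
    have hlk : l ≠ k := Finset.ne_of_mem_erase hl
    simp only [hp, hp', Matrix.mulVec, dotProduct, Matrix.transpose_apply]
    exact Finset.sum_congr rfl fun i _ => by rw [hcols l hlk i]
  -- split sums at k
  have hsplit : ∀ f : Fin K → ℝ,
      (∑ l, f l) = f k + ∑ l ∈ Finset.univ.erase k, f l := fun f =>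
    (Finset.add_sum_erase _ f (Finset.mem_univ k)).symm
  -- scalar normal form of each of the three pieces, for an arbitrary pp
  have hGform : ∀ pp : Fin K → ℝ,
      (∑ l, pp l * ((s l ^ 2)⁻¹ * pp l))
        - (∑ l, ((s l ^ 2)⁻¹ * pp l + c l) * ∑ m, S l m * ((s m ^ 2)⁻¹ * pp m + c m))
        - (r * (s k ^ 2)⁻¹ * pp k
            - ((∑ l, S k l * c l) + ∑ l ∈ Finset.univ.erase k, (S k l / s l ^ 2) * pp l) / r) ^ 2
      = ((s k ^ 2)⁻¹ * (pp k) ^ 2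
          - (((s k ^ 2)⁻¹ * pp k + c k) * (S k k * ((s k ^ 2)⁻¹ * pp k + c k))
            + ((s k ^ 2)⁻¹ * pp k + c k) * (∑ m ∈ Finset.univ.erase k, S k m * ((s m ^ 2)⁻¹ * pp m + c m))
            + (∑ m ∈ Finset.univ.erase k, S k m * ((s m ^ 2)⁻¹ * pp m + c m)) * ((s k ^ 2)⁻¹ * pp k + c k))
          - (r * (s k ^ 2)⁻¹ * pp k
              - ((∑ l, S k l * c l) + ∑ l ∈ Finset.univ.erase k, (S k l / s l ^ 2) * pp l) / r) ^ 2)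
        + ((∑ l ∈ Finset.univ.erase k, pp l * ((s l ^ 2)⁻¹ * pp l))
          - ∑ l ∈ Finset.univ.erase k, ((s l ^ 2)⁻¹ * pp l + c l)
              * ∑ m ∈ Finset.univ.erase k, S l m * ((s m ^ 2)⁻¹ * pp m + c m)) := by
    intro pp
    set vf : Fin K → ℝ := fun l => (s l ^ 2)⁻¹ * pp l + c l with hvf
    have e1 : (∑ l, pp l * ((s l ^ 2)⁻¹ * pp l))
        = pp k * ((s k ^ 2)⁻¹ * pp k) + ∑ l ∈ Finset.univ.erase k, pp l * ((s l ^ 2)⁻¹ * pp l) :=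
      hsplit _
    have e2 : (∑ l, vf l * ∑ m, S l m * vf m)
        = vf k * (S k k * vf k + ∑ m ∈ Finset.univ.erase k, S k m * vf m)
          + ∑ l ∈ Finset.univ.erase k, vf l * (S l k * vf k + ∑ m ∈ Finset.univ.erase k, S l m * vf m) := by
      rw [hsplit (fun l => vf l * ∑ m, S l m * vf m)]
      congr 1
      · rw [hsplit (fun m => S k m * vf m)]
      · refine Finset.sum_congr rfl fun l _ => ?_
        rw [hsplit (fun m => S l m * vf m)]
    have e3 : (∑ l ∈ Finset.univ.erase k, vf l * (S l k * vf k + ∑ m ∈ Finset.univ.erase k, S l m * vf m))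
        = (∑ m ∈ Finset.univ.erase k, S k m * vf m) * vf k
          + ∑ l ∈ Finset.univ.erase k, vf l * ∑ m ∈ Finset.univ.erase k, S l m * vf m := by
      simp only [mul_add, Finset.sum_add_distrib]
      congr 1
      rw [Finset.sum_mul]
      refine Finset.sum_congr rfl fun l _ => ?_
      rw [hSsymm l k]
      ring
    rw [e1, e2, e3]
    ring
  rw [hGform p, hGform p']
  -- the erased sums agree
  have hc1 : (∑ l ∈ Finset.univ.erase k, p l * ((s l ^ 2)⁻¹ * p l))
      = ∑ l ∈ Finset.univ.erase k, p' l * ((s l ^ 2)⁻¹ * p' l) :=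
    Finset.sum_congr rfl fun l hl => by rw [hagree l hl]
  have hd : (∑ m ∈ Finset.univ.erase k, S k m * ((s m ^ 2)⁻¹ * p m + c m))
      = ∑ m ∈ Finset.univ.erase k, S k m * ((s m ^ 2)⁻¹ * p' m + c m) :=
    Finset.sum_congr rfl fun m hm => by rw [hagree m hm]
  have hc2 : (∑ l ∈ Finset.univ.erase k, ((s l ^ 2)⁻¹ * p l + c l)
        * ∑ m ∈ Finset.univ.erase k, S l m * ((s m ^ 2)⁻¹ * p m + c m))
      = ∑ l ∈ Finset.univ.erase k, ((s l ^ 2)⁻¹ * p' l + c l)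
        * ∑ m ∈ Finset.univ.erase k, S l m * ((s m ^ 2)⁻¹ * p' m + c m) := by
    refine Finset.sum_congr rfl fun l hl => ?_
    rw [hagree l hl]
    congr 1
    exact Finset.sum_congr rfl fun m hm => by rw [hagree m hm]
  have hbb : (∑ l ∈ Finset.univ.erase k, (S k l / s l ^ 2) * p l)
      = ∑ l ∈ Finset.univ.erase k, (S k l / s l ^ 2) * p' l :=
    Finset.sum_congr rfl fun l hl => by rw [hagree l hl]
  rw [hc1, hd, hc2, hbb]
  congr 1
  -- core cancellation
  have hbeq : (∑ l, S k l * c l) + ∑ l ∈ Finset.univ.erase k, (S k l / s l ^ 2) * p' l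
      = S k k * c k + ∑ m ∈ Finset.univ.erase k, S k m * ((s m ^ 2)⁻¹ * p' m + c m) := by
    rw [hsplit (fun l => S k l * c l)]
    simp only [mul_add, Finset.sum_add_distrib]
    have : (∑ l ∈ Finset.univ.erase k, (S k l / s l ^ 2) * p' l)
        = ∑ l ∈ Finset.univ.erase k, S k l * ((s l ^ 2)⁻¹ * p' l) :=
      Finset.sum_congr rfl fun l _ => by rw [div_eq_mul_inv]; ring
    rw [this]
    ring
  exact spaco_core (s k ^ 2) (S k k) w r (p k) (p' k) (c k) _ _ hsk2 rfl hr hr0 hbeq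
end

section
/- Let s_1,…,s_K > 0 and Λ_f = diag(1/s_1²,…,1/s_K²) ∈ ℝ^{K×K}, let Λ ∈ ℝ^{n×n} be symmetric, M ∈ ℝ^{n×K}, δ ∈ ℝ, and assume δΛ_f + MᵀΛM is invertible with Σ(δ) = (δΛ_f + MᵀΛM)⁻¹. Fix k ∈ {1,…,K} and let e_k be the k-th standard basis vector of ℝᴷ. Let z ∈ ℝ^q, β*, β ∈ ℝ^{q×K} with columns β*_ℓ, β_ℓ, ζ ∈ ℝᴷ, ε ∈ ℝⁿ, and set x = M((β*)ᵀz + ζ) + ε. Define ỹ(δ) = e_kᵀΣ(δ)MᵀΛx + δ·Σ_{ℓ≠k} (Σ(δ)_{kℓ}/s_ℓ²)·zᵀβ_ℓ and z̃(δ) = (1 − δ·Σ(δ)_{kk}/s_k²)·z. Then ỹ(δ) = z̃(δ)ᵀβ*_k + δ·Σ_{ℓ≠k} (Σ(δ)_{kℓ}/s_ℓ²)·zᵀ(β_ℓ − β*_ℓ) + ξ, where ξ = e_kᵀ(Id_K − δΣ(δ)Λ_f)ζ + e_kᵀΣ(δ)MᵀΛε. -/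
open Matrix

/-- Deterministic decomposition behind Lemma 3: with x = M((β*)ᵀz + ζ) + ε and
Σ(δ) = (δΛ_f + MᵀΛM)⁻¹, the constructed response ỹ(δ) decomposes as
z̃(δ)ᵀβ*_k + δ·Σ_{ℓ≠k}(Σ(δ)_{kℓ}/s_ℓ²)·zᵀ(β_ℓ − β*_ℓ) + ξ, where
ξ = e_kᵀ(Id − δΣ(δ)Λ_f)ζ + e_kᵀΣ(δ)MᵀΛε. -/
theorem spaco_testing_response_decomposition
    {n K q : ℕ} (s : Fin K → ℝ) (hs : ∀ l, 0 < s l)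
    (Λ : Matrix (Fin n) (Fin n) ℝ) (hΛ : Λ.IsSymm)
    (M : Matrix (Fin n) (Fin K) ℝ) (δ : ℝ)
    (hinv : IsUnit (δ • (Matrix.diagonal fun l => (s l ^ 2)⁻¹) + Mᵀ * Λ * M))
    (k : Fin K) (z : Fin q → ℝ)
    (βs β : Matrix (Fin q) (Fin K) ℝ) (ζ : Fin K → ℝ) (ε : Fin n → ℝ) :
    let Λf : Matrix (Fin K) (Fin K) ℝ := Matrix.diagonal fun l => (s l ^ 2)⁻¹
    let S := (δ • Λf + Mᵀ * Λ * M)⁻¹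
    let e : Fin K → ℝ := Pi.single k 1
    let x := M.mulVec (βsᵀ.mulVec z + ζ) + ε
    let yt := e ⬝ᵥ S.mulVec (Mᵀ.mulVec (Λ.mulVec x))
        + δ * ∑ l ∈ Finset.univ.erase k, (S k l / s l ^ 2) * (z ⬝ᵥ fun i => β i l)
    let zt : Fin q → ℝ := fun i => (1 - δ * S k k / s k ^ 2) * z i
    let ξ := e ⬝ᵥ ((1 : Matrix (Fin K) (Fin K) ℝ) - δ • (S * Λf)).mulVec ζ
        + e ⬝ᵥ S.mulVec (Mᵀ.mulVec (Λ.mulVec ε))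
    yt = zt ⬝ᵥ (fun i => βs i k)
        + δ * (∑ l ∈ Finset.univ.erase k,
            (S k l / s l ^ 2) * (z ⬝ᵥ fun i => β i l - βs i l))
        + ξ := by
  intro Λf S e x yt zt ξ
  have hdet : IsUnit (δ • Λf + Mᵀ * Λ * M).det :=
    (Matrix.isUnit_iff_isUnit_det _).mp hinv
  have hSmul : S * (δ • Λf + Mᵀ * Λ * M) = 1 := Matrix.nonsing_inv_mul _ hdet
  have hS : S * (Mᵀ * Λ * M) = 1 - δ • (S * Λf) := by
    have := hSmul
    rw [Matrix.mul_add] at this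
    rw [← this]
    simp [Matrix.mul_smul]
  set w := βsᵀ.mulVec z with hw
  have hx : S.mulVec (Mᵀ.mulVec (Λ.mulVec x))
      = ((1 : Matrix (Fin K) (Fin K) ℝ) - δ • (S * Λf)).mulVec (w + ζ)
        + S.mulVec (Mᵀ.mulVec (Λ.mulVec ε)) := by
    show S.mulVec (Mᵀ.mulVec (Λ.mulVec (M.mulVec (w + ζ) + ε))) = _
    simp only [Matrix.mulVec_add, Matrix.mulVec_mulVec]
    rw [show Mᵀ * (Λ * M) = Mᵀ * Λ * M from (Matrix.mul_assoc _ _ _).symm, hS]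
  have hdot : ∀ v : Fin K → ℝ, e ⬝ᵥ v = v k := by
    intro v; simp [e]
  have hentry : ∀ v : Fin K → ℝ,
      (((1 : Matrix (Fin K) (Fin K) ℝ) - δ • (S * Λf)).mulVec v) k
        = v k - δ * ∑ l, S k l / s l ^ 2 * v l := by
    intro v
    simp [Matrix.sub_mulVec, Matrix.smul_mulVec, Matrix.mulVec, dotProduct,
      Matrix.mul_apply, Λf, Matrix.diagonal, Finset.mul_sum, div_eq_mul_inv, mul_assoc,
      sub_mul, Finset.sum_sub_distrib, Matrix.one_apply, ite_mul, one_mul, zero_mul,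
      Finset.sum_ite_eq]
  have hwl : ∀ l, w l = z ⬝ᵥ fun i => βs i l := by
    intro l
    simp [hw, Matrix.mulVec, dotProduct, Matrix.transpose_apply, mul_comm]
  have hyt : yt = (w k + ζ k - δ * ∑ l, S k l / s l ^ 2 * (w l + ζ l))
      + (S.mulVec (Mᵀ.mulVec (Λ.mulVec ε))) k
      + δ * ∑ l ∈ Finset.univ.erase k, (S k l / s l ^ 2) * (z ⬝ᵥ fun i => β i l) := by
    show e ⬝ᵥ S.mulVec (Mᵀ.mulVec (Λ.mulVec x)) + _ = _
    rw [hx]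
    rw [hdot]
    simp only [Pi.add_apply, hentry]
  rw [hyt]
  have hξ : ξ = (ζ k - δ * ∑ l, S k l / s l ^ 2 * ζ l)
      + (S.mulVec (Mᵀ.mulVec (Λ.mulVec ε))) k := by
    show e ⬝ᵥ _ + e ⬝ᵥ _ = _
    rw [hdot, hdot, hentry]
  rw [hξ]
  have hzt : zt ⬝ᵥ (fun i => βs i k) = (1 - δ * S k k / s k ^ 2) * w k := by
    simp [zt, dotProduct, hwl k, Finset.mul_sum, mul_assoc]
  rw [hzt]
  have hsum1 : ∀ v : Fin K → ℝ, (∑ l, S k l / s l ^ 2 * v l)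
      = (∑ l ∈ Finset.univ.erase k, S k l / s l ^ 2 * v l) + S k k / s k ^ 2 * v k := by
    intro v
    rw [Finset.sum_erase_add]
    exact Finset.mem_univ k
  have hsplit : (∑ l ∈ Finset.univ.erase k, (S k l / s l ^ 2) * (z ⬝ᵥ fun i => β i l - βs i l))
      = (∑ l ∈ Finset.univ.erase k, (S k l / s l ^ 2) * (z ⬝ᵥ fun i => β i l))
        - (∑ l ∈ Finset.univ.erase k, (S k l / s l ^ 2) * (w l)) := by
    rw [← Finset.sum_sub_distrib]
    refine Finset.sum_congr rfl fun l _ => ?_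
    rw [hwl l, ← mul_sub]
    congr 1
    simp [dotProduct, Finset.sum_sub_distrib, mul_sub]
  rw [hsplit]
  simp only [Pi.add_apply, hsum1, mul_add, Finset.sum_add_distrib]
  ring
end

section
/- Let n be a positive integer, A ∈ ℝ^{n×n} a symmetric matrix, a, x₀ ∈ ℝⁿ, h₀ > 0, and γ > 0 such that ⟨y, Ay⟩ ≤ γ‖y‖₂² for all y ∈ ℝⁿ. Define f(x) = (1/2)⟨x, Ax⟩ − ⟨a, x⟩. Let 0 < ρ ≤ 1/γ, set x̃ = x₀ − ρ(Ax₀ − a), assume x̃ ≠ 0 and ‖x₀‖₂² = h₀, and let x* = √h₀ · x̃ / ‖x̃‖₂. Then f(x*) ≤ f(x₀). -/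
open Matrix

/-- Lemma 6 (descent claim): with ⟨y, Ay⟩ ≤ γ‖y‖₂² for all y, 0 < ρ ≤ 1/γ, ‖x₀‖₂² = h₀
and x̃ = x₀ − ρ(Ax₀ − a) ≠ 0, the norm-constrained proximal gradient update
x* = √h₀·x̃/‖x̃‖₂ satisfies f(x*) ≤ f(x₀) for f(x) = (1/2)⟨x, Ax⟩ − ⟨a, x⟩. -/
theorem proximal_descent
    {n : ℕ} (hn : 0 < n) (A : Matrix (Fin n) (Fin n) ℝ) (hA : A.IsSymm)
    (a x₀ : Fin n → ℝ) (h₀ γ : ℝ) (hh₀ : 0 < h₀) (hγ : 0 < γ)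
    (hbound : ∀ y : Fin n → ℝ, y ⬝ᵥ A.mulVec y ≤ γ * ∑ i, y i ^ 2)
    (ρ : ℝ) (hρ : 0 < ρ) (hργ : ρ ≤ 1 / γ) :
    let f : (Fin n → ℝ) → ℝ := fun x => (1 / 2) * (x ⬝ᵥ A.mulVec x) - a ⬝ᵥ x
    let xt := x₀ - ρ • (A.mulVec x₀ - a)
    xt ≠ 0 → (∑ i, x₀ i ^ 2) = h₀ →
      f ((Real.sqrt h₀ / Real.sqrt (∑ i, xt i ^ 2)) • xt) ≤ f x₀ := by
  intro f xt hxt hnorm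
  have hsq : ∀ y : Fin n → ℝ, (∑ i, y i ^ 2) = y ⬝ᵥ y := by
    intro y; simp [dotProduct, sq]
  have hsymm : ∀ x y : Fin n → ℝ, x ⬝ᵥ A.mulVec y = y ⬝ᵥ A.mulVec x := by
    intro x y
    rw [Matrix.dotProduct_mulVec]
    conv_lhs => rw [← hA.eq]
    rw [Matrix.vecMul_transpose, dotProduct_comm]
  set u := x₀ ⬝ᵥ A.mulVec x₀ with hu
  set w := xt ⬝ᵥ A.mulVec xt with hw
  set v := x₀ ⬝ᵥ A.mulVec xt with hv
  set p := a ⬝ᵥ x₀ with hp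
  set q := a ⬝ᵥ xt with hq
  set b := x₀ ⬝ᵥ xt with hb
  set t := xt ⬝ᵥ xt with ht
  have ht0 : 0 < t := by
    rw [ht, ← hsq]
    have hex : ∃ i, xt i ≠ 0 := by
      by_contra h
      push_neg at h
      exact hxt (funext h)
    obtain ⟨i, hi⟩ := hex
    exact Finset.sum_pos' (fun j _ => sq_nonneg _) ⟨i, Finset.mem_univ i, by positivity⟩
  have hh : x₀ ⬝ᵥ x₀ = h₀ := by rw [← hsq]; exact hnorm
  set c := Real.sqrt h₀ / Real.sqrt t with hc
  have hst : Real.sqrt t * Real.sqrt t = t := Real.mul_self_sqrt ht0.le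
  have hsh : Real.sqrt h₀ * Real.sqrt h₀ = h₀ := Real.mul_self_sqrt hh₀.le
  have hstpos : 0 < Real.sqrt t := Real.sqrt_pos.2 ht0
  have hc0 : 0 < c := div_pos (Real.sqrt_pos.2 hh₀) hstpos
  have hct : c ^ 2 * t = h₀ := by
    rw [hc]
    field_simp
    rw [Real.sq_sqrt hh₀.le, Real.sq_sqrt ht0.le]; ring
  -- Cauchy–Schwarz: b ≤ c * t
  have hcs : b ≤ c * t := by
    have h1 : b ≤ Real.sqrt (∑ i, x₀ i ^ 2) * Real.sqrt (∑ i, xt i ^ 2) := by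
      have := Real.sum_mul_le_sqrt_mul_sqrt Finset.univ x₀ xt
      simpa [hb, dotProduct] using this
    have h2 : c * t = Real.sqrt h₀ * Real.sqrt t := by
      rw [hc, div_mul_eq_mul_div, eq_comm, eq_div_iff hstpos.ne', mul_assoc, hst]
    rw [h2]
    calc b ≤ Real.sqrt (∑ i, x₀ i ^ 2) * Real.sqrt (∑ i, xt i ^ 2) := h1
      _ = Real.sqrt h₀ * Real.sqrt t := by rw [hnorm, hsq xt, ← ht]
  -- relation from definition of xt
  have hrel : ∀ y : Fin n → ℝ, y ⬝ᵥ x₀ - y ⬝ᵥ xt = ρ * (y ⬝ᵥ A.mulVec x₀ - y ⬝ᵥ a) := by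
    intro y
    simp only [xt, dotProduct_sub, dotProduct_smul, smul_eq_mul]
    ring
  have hrel1 : h₀ - b = ρ * (u - p) := by
    have h := hrel x₀
    rw [hh, dotProduct_comm x₀ a] at h
    rw [hb, hu, hp]
    exact h
  have hrel2 : b - t = ρ * (v - q) := by
    have h := hrel xt
    rw [dotProduct_comm xt x₀, hsymm xt x₀, dotProduct_comm xt a] at h
    rw [hb, ht, hv, hq]
    exact h
  -- curvature bound at d = c • xt - x₀
  have hdexp : (c • xt - x₀) ⬝ᵥ A.mulVec (c • xt - x₀) = c ^ 2 * w - 2 * c * v + u := by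
    rw [Matrix.mulVec_sub, Matrix.mulVec_smul]
    simp only [sub_dotProduct, dotProduct_sub, smul_dotProduct, dotProduct_smul, smul_eq_mul]
    rw [hsymm xt x₀]
    rw [hw, hv, hu]
    ring
  have hdsq : (∑ i, (c • xt - x₀) i ^ 2) = c ^ 2 * t - 2 * c * b + h₀ := by
    rw [hsq]
    simp only [sub_dotProduct, dotProduct_sub, smul_dotProduct, dotProduct_smul, smul_eq_mul]
    rw [dotProduct_comm xt x₀, hh]
    rw [ht, hb]
    ring
  have hcurv : c ^ 2 * w - 2 * c * v + u ≤ γ * (c ^ 2 * t - 2 * c * b + h₀) := by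
    have h := hbound (c • xt - x₀)
    rwa [hdexp, hdsq] at h
  -- express the two sides of the goal
  have hfs : f ((Real.sqrt h₀ / Real.sqrt (∑ i, xt i ^ 2)) • xt)
      = (1/2) * (c ^ 2 * w) - c * q := by
    have hcc : (Real.sqrt h₀ / Real.sqrt (∑ i, xt i ^ 2)) = c := by
      rw [hsq xt, ← ht, hc]
    rw [hcc]
    show (1 / 2) * ((c • xt) ⬝ᵥ A.mulVec (c • xt)) - a ⬝ᵥ (c • xt)
        = (1/2) * (c ^ 2 * w) - c * q
    rw [Matrix.mulVec_smul]
    simp only [smul_dotProduct, dotProduct_smul, smul_eq_mul]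
    rw [hw, hq]
    ring
  have hfx : f x₀ = (1/2) * u - p := by
    show (1 / 2) * (x₀ ⬝ᵥ A.mulVec x₀) - a ⬝ᵥ x₀ = (1/2) * u - p
    rw [hu, hp]
  rw [hfs, hfx]
  clear_value c
  clear_value u w v p q b t
  clear hsq hsymm hrel hdexp hdsq hfs hfx
  -- combine
  have hρinv : γ ≤ 1 / ρ := by
    rw [le_div_iff₀ hρ]
    calc γ * ρ = ρ * γ := by ring
      _ ≤ (1/γ) * γ := by nlinarith
      _ = 1 := by field_simp
  have hpos : 0 ≤ c ^ 2 * t - 2 * c * b + h₀ := by nlinarith [hcs, hct, hc0]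
  have h1 : ρ * (c ^ 2 * w - 2 * c * v + u) ≤ c ^ 2 * t - 2 * c * b + h₀ := by
    have h2 : c ^ 2 * w - 2 * c * v + u ≤ (1/ρ) * (c ^ 2 * t - 2 * c * b + h₀) :=
      hcurv.trans (mul_le_mul_of_nonneg_right hρinv hpos)
    have h3 := mul_le_mul_of_nonneg_left h2 hρ.le
    calc ρ * (c ^ 2 * w - 2 * c * v + u)
        ≤ ρ * ((1/ρ) * (c ^ 2 * t - 2 * c * b + h₀)) := h3
      _ = c ^ 2 * t - 2 * c * b + h₀ := by field_simp
  have hrel2c : c * (b - t) = c * (ρ * (v - q)) := by rw [hrel2]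
  have key : ρ * ((1/2) * (c ^ 2 * w) - c * q) ≤ ρ * ((1/2) * u - p) := by
    linarith [h1, hrel1, hrel2c, hct, hcs]
  exact le_of_mul_le_mul_left key hρ
end

section
/- Let ι be a nonempty finite index set and let f, g : ι → ℝ with f(i) > 0 and g(i) > 0 for all i ∈ ι. If Σ_{i∈ι} f(i)·log g(i) ≥ Σ_{i∈ι} f(i)·log f(i), then Σ_{i∈ι} g(i) ≥ Σ_{i∈ι} f(i). -/
/-- EM monotonicity principle used in Theorem 1: if the expected complete-data
log-likelihood does not decrease, Σ f·log g ≥ Σ f·log f, then the marginal likelihood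
does not decrease, Σ g ≥ Σ f. -/
theorem em_monotonicity
    {ι : Type*} [Fintype ι] [Nonempty ι] (f g : ι → ℝ)
    (hf : ∀ i, 0 < f i) (hg : ∀ i, 0 < g i)
    (h : ∑ i, f i * Real.log (g i) ≥ ∑ i, f i * Real.log (f i)) :
    ∑ i, g i ≥ ∑ i, f i := by
  have key : ∀ i, f i * Real.log (g i) - f i * Real.log (f i) ≤ g i - f i := by
    intro i
    have hlog : Real.log (g i / f i) ≤ g i / f i - 1 :=
      Real.log_le_sub_one_of_pos (div_pos (hg i) (hf i))
    have := mul_le_mul_of_nonneg_left hlog (hf i).le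
    rw [Real.log_div (hg i).ne' (hf i).ne'] at this
    calc f i * Real.log (g i) - f i * Real.log (f i)
        = f i * (Real.log (g i) - Real.log (f i)) := by ring
      _ ≤ f i * (g i / f i - 1) := this
      _ = g i - f i := by rw [mul_sub, mul_div_cancel₀ _ (hf i).ne']; ring
  have hsum : ∑ i, (f i * Real.log (g i) - f i * Real.log (f i)) ≤ ∑ i, (g i - f i) :=
    Finset.sum_le_sum fun i _ => key i
  rw [Finset.sum_sub_distrib, Finset.sum_sub_distrib] at hsum
  linarith
end
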